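/- Let R = F₂⟦x, y, z⟧. Let f ∈ R be a power series involving only the variables x and y whose coefficients vanish in all total degrees ≤ 1, and let g ∈ R be a power series involving only the variables y and z whose coefficients vanish in all total degrees ≤ 1. Then the principal ideals (z − f) and (x − g) are distinct prime ideals of R, and (z − f) ∩ (x − g) = ((z − f)·(x − g)). -/

import Mathlib

open MvPowerSeries Finsupp

namespace Stmt12Aux

noncomputable section

abbrev R3 := MvPowerSeries (Fin 3) (ZMod 2)

def deg (d : Fin 3 →₀ ℕ) : ℕ := ∑ j, d j

lemma deg_add (u v : Fin 3 →₀ ℕ) : deg (u + v) = deg u + deg v := by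
  simp [deg, Finsupp.add_apply, Finset.sum_add_distrib]

/-- `w` has order at least `n`. -/
def OrdGE (n : ℕ) (w : R3) : Prop := ∀ d, deg d < n → coeff d w = 0

lemma ordGE_mono {m n : ℕ} {w : R3} (h : OrdGE m w) (hn : n ≤ m) : OrdGE n w :=
  fun d hd => h d (lt_of_lt_of_le hd hn)

lemma ordGE_mul {m n : ℕ} {a b : R3} (ha : OrdGE m a) (hb : OrdGE n b) :
    OrdGE (m + n) (a * b) := by
  intro d hd
  rw [coeff_mul]
  refine Finset.sum_eq_zero fun p hp => ?_
  rw [Finset.HasAntidiagonal.mem_antidiagonal] at hp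
  have hsum : deg p.1 + deg p.2 = deg d := by rw [← deg_add, hp]
  rcases lt_or_ge (deg p.1) m with h1 | h1
  · rw [ha _ h1, zero_mul]
  · rw [hb _ (by omega), mul_zero]

def shiftI (i : Fin 3) (w : R3) : R3 := fun d => coeff (d + single i 1) w

def freeI (i : Fin 3) (w : R3) : R3 := fun d => if d i = 0 then coeff d w else 0

lemma coeff_shiftI (i : Fin 3) (d : Fin 3 →₀ ℕ) (w : R3) :
    coeff d (shiftI i w) = coeff (d + single i 1) w := rfl

lemma coeff_freeI (i : Fin 3) (d : Fin 3 →₀ ℕ) (w : R3) :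
    coeff d (freeI i w) = if d i = 0 then coeff d w else 0 := rfl

lemma ordGE_shiftI {n : ℕ} (i : Fin 3) {w : R3} (h : OrdGE n w) :
    OrdGE (n - 1) (shiftI i w) := by
  intro d hd
  rw [coeff_shiftI]
  apply h
  rw [deg_add]
  have : deg (single i 1) = 1 := by simp [deg, Finsupp.single_apply]
  omega

lemma ordGE_freeI {n : ℕ} (i : Fin 3) {w : R3} (h : OrdGE n w) :
    OrdGE n (freeI i w) := by
  intro d hd
  rw [coeff_freeI]
  split <;> simp [h d hd]

lemma split (i : Fin 3) (w : R3) : w = freeI i w + X i * shiftI i w := by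
  ext d
  rw [map_add, X_def, coeff_monomial_mul]
  by_cases h : d i = 0
  · rw [if_neg (by rw [Finsupp.single_le_iff]; omega), coeff_freeI, if_pos h, add_zero]
  · have hle : single i 1 ≤ d := by rw [Finsupp.single_le_iff]; omega
    rw [if_pos hle, one_mul, coeff_freeI, if_neg h, coeff_shiftI,
      tsub_add_cancel_of_le hle, zero_add]

/-- The successive-approximation triple `(qₙ, rₙ, wₙ)` for division of `h` by `X i - f`. -/
def div3 (i : Fin 3) (f h : R3) : ℕ → R3 × R3 × R3
  | 0 => (0, 0, h)
  | n + 1 =>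
    let t := div3 i f h n
    (t.1 + shiftI i t.2.2, t.2.1 + freeI i t.2.2, f * shiftI i t.2.2)

lemma div3_inv (i : Fin 3) (f h : R3) (n : ℕ) :
    h = (div3 i f h n).1 * (X i - f) + (div3 i f h n).2.1 + (div3 i f h n).2.2 := by
  induction n with
  | zero => simp [div3]
  | succ n ih =>
    rw [div3]
    have hw := split i (div3 i f h n).2.2
    set t := div3 i f h n
    calc h = t.1 * (X i - f) + t.2.1 + t.2.2 := ih
    _ = t.1 * (X i - f) + t.2.1 + (freeI i t.2.2 + X i * shiftI i t.2.2) := by rw [← hw]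
    _ = (t.1 + shiftI i t.2.2) * (X i - f) + (t.2.1 + freeI i t.2.2)
        + f * shiftI i t.2.2 := by ring

lemma div3_w_ord (i : Fin 3) {f : R3} (hf : OrdGE 2 f) (h : R3) (n : ℕ) :
    OrdGE n (div3 i f h n).2.2 := by
  induction n with
  | zero => exact fun d hd => absurd hd (by omega)
  | succ n ih =>
    rw [div3]
    have := ordGE_mul hf (ordGE_shiftI i ih)
    exact ordGE_mono this (by omega)

lemma div3_r_free (i : Fin 3) (f h : R3) (n : ℕ) (d : Fin 3 →₀ ℕ) (hd : d i ≠ 0) :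
    coeff d (div3 i f h n).2.1 = 0 := by
  induction n with
  | zero => simp [div3]
  | succ n ih =>
    rw [div3]
    show coeff d ((div3 i f h n).2.1 + freeI i (div3 i f h n).2.2) = 0
    rw [map_add, ih, coeff_freeI, if_neg hd, add_zero]

lemma div3_q_stab (i : Fin 3) {f : R3} (hf : OrdGE 2 f) (h : R3) {n m : ℕ} (hnm : n ≤ m)
    (d : Fin 3 →₀ ℕ) (hd : deg d + 2 ≤ n) :
    coeff d (div3 i f h m).1 = coeff d (div3 i f h n).1 := by
  induction m with
  | zero => rw [Nat.le_zero.mp hnm]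
  | succ m ih =>
    rcases Nat.lt_or_ge n (m + 1) with hlt | hge
    · have hm : n ≤ m := by omega
      rw [div3]
      show coeff d ((div3 i f h m).1 + shiftI i (div3 i f h m).2.2) = _
      rw [map_add, ih hm, ordGE_shiftI i (div3_w_ord i hf h m) d (by omega), add_zero]
    · rw [show n = m + 1 by omega]

lemma div3_r_stab (i : Fin 3) {f : R3} (hf : OrdGE 2 f) (h : R3) {n m : ℕ} (hnm : n ≤ m)
    (d : Fin 3 →₀ ℕ) (hd : deg d + 1 ≤ n) :
    coeff d (div3 i f h m).2.1 = coeff d (div3 i f h n).2.1 := by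
  induction m with
  | zero => rw [Nat.le_zero.mp hnm]
  | succ m ih =>
    rcases Nat.lt_or_ge n (m + 1) with hlt | hge
    · have hm : n ≤ m := by omega
      rw [div3]
      show coeff d ((div3 i f h m).2.1 + freeI i (div3 i f h m).2.2) = _
      rw [map_add, ih hm, ordGE_freeI i (div3_w_ord i hf h m) d (by omega), add_zero]
    · rw [show n = m + 1 by omega]

/-- Division with remainder by `X i - f`. -/
lemma division (i : Fin 3) {f : R3} (hf : OrdGE 2 f) (h : R3) :
    ∃ q r : R3, h = q * (X i - f) + r ∧ ∀ d, d i ≠ 0 → coeff d r = 0 := by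
  refine ⟨(fun d => coeff d (div3 i f h (deg d + 2)).1 : R3),
    (fun d => coeff d (div3 i f h (deg d + 1)).2.1 : R3), ?_, ?_⟩
  · ext d
    set q : R3 := (fun d => coeff d (div3 i f h (deg d + 2)).1 : R3)
    set r : R3 := (fun d => coeff d (div3 i f h (deg d + 1)).2.1 : R3)
    set N := deg d + 2 with hN
    have key := div3_inv i f h N
    have hw0 : coeff d (div3 i f h N).2.2 = 0 :=
      div3_w_ord i hf h N d (by omega)
    have hqN : coeff d (q * (X i - f)) =
        coeff d ((div3 i f h N).1 * (X i - f)) := by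
      classical
      rw [coeff_mul, coeff_mul]
      refine Finset.sum_congr rfl fun p hp => ?_
      rw [Finset.HasAntidiagonal.mem_antidiagonal] at hp
      have hdeg : deg p.1 ≤ deg d := by
        have := deg_add p.1 p.2; rw [hp] at this; omega
      have : coeff p.1 q = coeff p.1 (div3 i f h N).1 := by
        show coeff p.1 (div3 i f h (deg p.1 + 2)).1 = _
        rw [div3_q_stab i hf h (show deg p.1 + 2 ≤ N by omega) p.1 le_rfl]
      rw [this]
    have hrN : coeff d r = coeff d (div3 i f h N).2.1 := by
      show coeff d (div3 i f h (deg d + 1)).2.1 = _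
      rw [div3_r_stab i hf h (show deg d + 1 ≤ N by omega) d le_rfl]
    conv_lhs => rw [key]
    rw [map_add, map_add, hw0, add_zero]
    conv_rhs => rw [map_add]
    rw [hqN, hrN]
  · intro d hd
    show coeff d (div3 i f h (deg d + 1)).2.1 = 0
    exact div3_r_free i f h _ d hd

/-- Regularity: if `(X i - f) * q` is `i`-free then `q = 0`. -/
lemma regular (i : Fin 3) {f : R3} (hf : OrdGE 2 f) {q : R3}
    (hfree : ∀ d, d i ≠ 0 → coeff d ((X i - f) * q) = 0) : q = 0 := by
  classical
  by_contra hq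
  have hex : ∃ n, ∃ d, deg d = n ∧ coeff d q ≠ 0 := by
    rw [MvPowerSeries.ext_iff] at hq
    push_neg at hq
    obtain ⟨d, hd⟩ := hq
    exact ⟨deg d, d, rfl, by simpa using hd⟩
  obtain ⟨d, hdeg, hdne⟩ := Nat.find_spec hex
  set n := Nat.find hex with hn
  have hmin : ∀ b, deg b < n → coeff b q = 0 := by
    intro b hb
    by_contra hbne
    have : Nat.find hex ≤ deg b := Nat.find_le ⟨b, rfl, hbne⟩
    omega
  have hXq : coeff (d + single i 1) (X i * q) = coeff d q := by
    rw [X_def, coeff_monomial_mul, if_pos le_add_self, one_mul, add_tsub_cancel_right]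
  have hfq : coeff (d + single i 1) (f * q) = 0 := by
    classical
    rw [coeff_mul]
    refine Finset.sum_eq_zero fun p hp => ?_
    rw [Finset.HasAntidiagonal.mem_antidiagonal] at hp
    by_cases h1 : deg p.1 < 2
    · rw [hf _ h1, zero_mul]
    · have hs : deg p.1 + deg p.2 = deg d + 1 := by
        have h2 := deg_add p.1 p.2
        rw [hp, deg_add] at h2
        have h3 : deg (single i 1) = 1 := by simp [deg, Finsupp.single_apply]
        omega
      rw [hmin p.2 (by omega), mul_zero]
  have hkey := hfree (d + single i 1) (by simp)
  rw [sub_mul, map_sub, hXq, hfq, sub_zero] at hkey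
  exact hdne hkey

lemma prime_XiSubF (i : Fin 3) {f : R3} (hf : OrdGE 2 f) : Prime (X i - f) := by
  refine ⟨?_, ?_, ?_⟩
  · intro h0
    have h1 : coeff (single i 1) (X i - f) = 1 := by
      classical
      rw [map_sub, coeff_X, if_pos rfl,
        hf _ (by simp [deg, Finsupp.single_apply]), sub_zero]
    rw [h0, map_zero] at h1
    exact one_ne_zero h1.symm
  · intro hu
    have h2 := hu.map (constantCoeff)
    rw [map_sub, constantCoeff_X] at h2
    have h3 : constantCoeff f = 0 := hf 0 (by simp [deg])
    rw [h3, sub_zero] at h2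
    simpa using h2
  · intro a b hab
    obtain ⟨qa, ra, ha, hra⟩ := division i hf a
    obtain ⟨qb, rb, hb, hrb⟩ := division i hf b
    obtain ⟨c0, hc0⟩ := hab
    have hdvd : ra * rb = (X i - f) *
        (c0 - (qa * rb + qb * ra + qa * qb * (X i - f))) := by
      rw [ha, hb] at hc0
      linear_combination hc0
    have hcfree : ∀ d, d i ≠ 0 → coeff d
        ((X i - f) * (c0 - (qa * rb + qb * ra + qa * qb * (X i - f)))) = 0 := by
      intro d hd
      rw [← hdvd]
      classical
      rw [coeff_mul]
      refine Finset.sum_eq_zero fun p hp => ?_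
      rw [Finset.HasAntidiagonal.mem_antidiagonal] at hp
      by_cases h1 : p.1 i = 0
      · have h2 : p.2 i ≠ 0 := by
          have h3 : p.1 i + p.2 i = d i := by rw [← hp]; simp
          omega
        rw [hrb _ h2, mul_zero]
      · rw [hra _ h1, zero_mul]
    have hc00 := regular i hf hcfree
    rw [hc00, mul_zero] at hdvd
    rcases mul_eq_zero.mp hdvd with h | h
    · exact Or.inl ⟨qa, by rw [ha, h, add_zero, mul_comm]⟩
    · exact Or.inr ⟨qb, by rw [hb, h, add_zero, mul_comm]⟩

lemma not_dvd {f g : R3}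
    (hfdeg : ∀ d : Fin 3 →₀ ℕ, (∑ j, d j) ≤ 1 → coeff d f = 0)
    (hgdeg : ∀ d : Fin 3 →₀ ℕ, (∑ j, d j) ≤ 1 → coeff d g = 0) :
    ¬ (X 0 - g) ∣ (X 2 - f) := by
  classical
  rintro ⟨c, hc⟩
  have h1 : coeff (single (2 : Fin 3) 1) (X 2 - f) = 1 := by
    rw [map_sub, coeff_X, if_pos rfl,
      hfdeg _ (by simp [Finsupp.single_apply]), sub_zero]
  have h2 : coeff (single (2 : Fin 3) 1) ((X 0 - g) * c) = 0 := by
    rw [coeff_mul]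
    refine Finset.sum_eq_zero fun p hp => ?_
    rw [Finset.HasAntidiagonal.mem_antidiagonal] at hp
    have hd1 : deg p.1 + deg p.2 = 1 := by
      have h3 := deg_add p.1 p.2
      rw [hp] at h3
      have h4 : deg (single (2 : Fin 3) 1) = 1 := by simp [deg, Finsupp.single_apply]
      omega
    have hp0 : p.1 0 = 0 := by
      have h5 : p.1 0 + p.2 0 = (single (2 : Fin 3) 1) 0 := by rw [← hp]; simp
      simp [Finsupp.single_apply] at h5
      omega
    have hX : coeff p.1 (X 0 : R3) = 0 := by
      rw [coeff_X, if_neg]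
      intro h6
      rw [h6] at hp0
      simp [Finsupp.single_apply] at hp0
    rw [map_sub, hX, hgdeg _ (by have h7 := hd1; unfold deg at h7; exact le_trans (Nat.le_add_right _ _) (le_of_eq h7)), sub_zero,
      zero_mul]
  rw [hc, h2] at h1
  exact one_ne_zero h1.symm

end

end Stmt12Aux

open Stmt12Aux

/-- In `R = 𝔽₂⟦x, y, z⟧` (variables `x = X 0`, `y = X 1`, `z = X 2`), if `f` involves
only `x, y` and `g` involves only `y, z`, both with vanishing coefficients in total
degrees ≤ 1, then `(z − f)` and `(x − g)` are distinct prime ideals and their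
intersection is the principal ideal `((z − f)·(x − g))`. -/
theorem stmt12 (f g : MvPowerSeries (Fin 3) (ZMod 2))
    (hfxy : ∀ d : Fin 3 →₀ ℕ, coeff d f ≠ 0 → d 2 = 0)
    (hfdeg : ∀ d : Fin 3 →₀ ℕ, (∑ i, d i) ≤ 1 → coeff d f = 0)
    (hgyz : ∀ d : Fin 3 →₀ ℕ, coeff d g ≠ 0 → d 0 = 0)
    (hgdeg : ∀ d : Fin 3 →₀ ℕ, (∑ i, d i) ≤ 1 → coeff d g = 0) :
    (Ideal.span {X 2 - f} : Ideal (MvPowerSeries (Fin 3) (ZMod 2))).IsPrime ∧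
    (Ideal.span {X 0 - g} : Ideal (MvPowerSeries (Fin 3) (ZMod 2))).IsPrime ∧
    (Ideal.span {X 2 - f} : Ideal (MvPowerSeries (Fin 3) (ZMod 2))) ≠ Ideal.span {X 0 - g} ∧
    (Ideal.span {X 2 - f} : Ideal (MvPowerSeries (Fin 3) (ZMod 2))) ⊓ Ideal.span {X 0 - g} =
      Ideal.span {(X 2 - f) * (X 0 - g)} := by
  have hf2 : OrdGE 2 f := fun d hd => hfdeg d (by unfold deg at hd; omega)
  have hg2 : OrdGE 2 g := fun d hd => hgdeg d (by unfold deg at hd; omega)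
  have hpf := prime_XiSubF 2 hf2
  have hpg := prime_XiSubF 0 hg2
  have hnd : ¬ (X 0 - g) ∣ (X 2 - f) := not_dvd hfdeg hgdeg
  have hne : (Ideal.span {X 2 - f} : Ideal R3) ≠ Ideal.span {X 0 - g} := by
    intro h
    exact hnd (Ideal.mem_span_singleton.mp
      (h ▸ Ideal.mem_span_singleton_self (X 2 - f)))
  refine ⟨(Ideal.span_singleton_prime hpf.ne_zero).mpr hpf,
    (Ideal.span_singleton_prime hpg.ne_zero).mpr hpg, hne, ?_⟩
  apply le_antisymm
  · intro x hx
    obtain ⟨hx1, hx2⟩ := Submodule.mem_inf.mp hx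
    rw [Ideal.mem_span_singleton] at hx1 hx2 ⊢
    obtain ⟨a, ha⟩ := hx1
    obtain ⟨b, hb⟩ := hx2
    have hq : (X 0 - g) ∣ (X 2 - f) * a := ⟨b, by rw [← ha, hb]⟩
    rcases hpg.2.2 _ _ hq with h | h
    · exact absurd h hnd
    · obtain ⟨c, hcc⟩ := h
      exact ⟨c, by rw [ha, hcc]; ring⟩
  · apply le_inf
    · rw [Ideal.span_le, Set.singleton_subset_iff]
      exact Ideal.mem_span_singleton.mpr ⟨X 0 - g, rfl⟩
    · rw [Ideal.span_le, Set.singleton_subset_iff]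
      exact Ideal.mem_span_singleton.mpr ⟨X 2 - f, mul_comm _ _⟩
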